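/- arXiv:2108.03022 — 6 statements merged into one kernel-verified Lean document; each statement's English description precedes it below -/
import Mathlib

section
/- Let Π be an epistemic logic program. Every world view of Π is a plausible world view interpretation of Π; that is, if W ∈ WVS(Π), then AS(Π_pe^W) ≠ ∅, where Π_pe = {r ∈ Π : ax-ats(r) = ∅} is the purely-epistemic part of Π. -/
/- Formalization of epistemic logic programs (ELPs), following the paper
   "Utilizing Treewidth for Quantitative Reasoning on Epistemic Logic Programs". -/

namespace ELP

variable {α : Type}

/-- A literal over atoms `α`: an atom together with a polarity
    (`true` = the atom itself, `false` = its classical negation `¬a`). -/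
abbrev Lit (α : Type) := α × Bool

/-- A rule of a plain (disjunctive) logic program:
    `a₁ ∨ … ∨ a_k ← a_{k+1}, …, a_m, ¬a_{m+1}, …, ¬a_n`. -/
structure PRule (α : Type) where
  head : Set α
  bpos : Set α
  bneg : Set α

/-- An interpretation `I` satisfies a rule `r` if `(H_r ∪ B⁻_r) ∩ I ≠ ∅` or `B⁺_r ⊄ I`. -/
def PRule.SatBy (r : PRule α) (I : Set α) : Prop :=
  ((r.head ∪ r.bneg) ∩ I).Nonempty ∨ ¬ r.bpos ⊆ I

/-- `I` is a model of the program `P`. -/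
def IsModelOf (I : Set α) (P : Set (PRule α)) : Prop := ∀ r ∈ P, r.SatBy I

/-- The Gelfond–Lifschitz reduct `P^I`: drop rules whose negative body intersects `I`,
    and delete the negative bodies of the remaining rules. -/
def glReduct (P : Set (PRule α)) (I : Set α) : Set (PRule α) :=
  { r' | ∃ r ∈ P, r.bneg ∩ I = ∅ ∧ r' = ⟨r.head, r.bpos, ∅⟩ }

/-- `I` is an answer set of `P` if it is a ⊆-minimal model of the GL reduct `P^I`. -/
def IsAnswerSet (P : Set (PRule α)) (I : Set α) : Prop :=
  IsModelOf I (glReduct P I) ∧ ∀ J ⊆ I, IsModelOf J (glReduct P I) → J = I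

/-- `AS(P)`, the set of answer sets of `P`. -/
def answerSets (P : Set (PRule α)) : Set (Set α) := { I | IsAnswerSet P I }

/-- A rule of an epistemic logic program (ELP):
    `a₁ ∨ … ∨ a_k ← ℓ_{k+1}, …, ℓ_m, ξ_{m+1}, …, ξ_j, ¬ξ_{j+1}, …, ¬ξ_n`,
    where the objective literals `ℓ_i` are split into positive (`bpos`) and negative
    (`bneg`) body atoms, `epos` are the epistemic literals `not ℓ` occurring positively
    and `eneg` those occurring under classical negation `¬`. -/
structure ERule (α : Type) where
  head : Set α
  bpos : Set α
  bneg : Set α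
  epos : Set (Lit α)
  eneg : Set (Lit α)

/-- `ex-ats(r)`: the atoms occurring in epistemic literals of `r`. -/
def ERule.exats (r : ERule α) : Set α := Prod.fst '' (r.epos ∪ r.eneg)

/-- `ats(r)`: all atoms occurring in `r`. -/
def ERule.ats (r : ERule α) : Set α := r.head ∪ r.bpos ∪ r.bneg ∪ r.exats

/-- `ax-ats(r) = ats(r) \ ex-ats(r)`: the non-epistemic atoms of `r`. -/
def ERule.axats (r : ERule α) : Set α := r.ats \ r.exats

/-- A rule is purely-epistemic if `ax-ats(r) = ∅`. -/
def ERule.PurelyEpistemic (r : ERule α) : Prop := r.axats = ∅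

/-- Well-formedness of an ELP rule, reflecting that in
    `a₁ ∨ … ∨ a_k ← ℓ_{k+1}, …, ℓ_m, ξ_{m+1}, …, ξ_n` the atoms `a₁, …, a_n`
    are distinct (in particular the head/body atoms are disjoint from the
    epistemic atoms) and that rules are finite objects. -/
def ERule.Wf (r : ERule α) : Prop :=
  (r.head ∪ r.bpos ∪ r.bneg) ∩ r.exats = ∅ ∧
  r.head ∩ r.bpos = ∅ ∧ r.head ∩ r.bneg = ∅ ∧ r.bpos ∩ r.bneg = ∅ ∧
  r.ats.Finite

/-- `ex-ats(Π)`. -/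
def elpExats (P : Set (ERule α)) : Set α := ⋃ r ∈ P, r.exats

/-- `ats(Π)`. -/
def elpAts (P : Set (ERule α)) : Set α := ⋃ r ∈ P, r.ats

/-- The purely-epistemic part `Π_pe = {r ∈ Π : ax-ats(r) = ∅}` of `Π`. -/
def peParts (P : Set (ERule α)) : Set (ERule α) := { r ∈ P | r.PurelyEpistemic }

/-- All rules of the ELP are well-formed. -/
def WfELP (P : Set (ERule α)) : Prop := ∀ r ∈ P, r.Wf

/-- A world view interpretation (WVI) over a set `A` of atoms:
    a consistent set of literals over `A`. -/
def IsWVI (A : Set α) (I : Set (Lit α)) : Prop :=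
  (∀ l ∈ I, l.1 ∈ A) ∧ ∀ a : α, ¬ ((a, true) ∈ I ∧ (a, false) ∈ I)

/-- The restriction `I|X` of a set of literals `I` to literals over atoms in `X`. -/
def restrict (I : Set (Lit α)) (X : Set α) : Set (Lit α) := { l ∈ I | l.1 ∈ X }

/-- The epistemic reduct `Π^I`: each epistemic literal `not ℓ` is replaced by `⊥`
    if `ℓ ∈ I` and by `⊤` otherwise.  A rule survives (with its epistemic literals
    deleted) iff no body occurrence becomes `⊥`, i.e. iff `ℓ ∉ I` for every positive
    epistemic literal `not ℓ` and `ℓ ∈ I` for every epistemic literal `not ℓ`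
    occurring under classical negation `¬`. -/
def ereduct (P : Set (ERule α)) (I : Set (Lit α)) : Set (PRule α) :=
  { r' | ∃ r ∈ P, (∀ l ∈ r.epos, l ∉ I) ∧ (∀ l ∈ r.eneg, l ∈ I) ∧
         r' = ⟨r.head, r.bpos, r.bneg⟩ }

/-- `I ⊨_p Π`: the WVI `I` is plausible for `Π`, i.e. `AS(Π_pe^I) ≠ ∅`. -/
def PlausibleFor (P : Set (ERule α)) (I : Set (Lit α)) : Prop :=
  (answerSets (ereduct (peParts P) I)).Nonempty

/-- Compatibility of a WVI `I` over `A` with a set `Js` of interpretations. -/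
def Compatible (A : Set α) (I : Set (Lit α)) (Js : Set (Set α)) : Prop :=
  Js.Nonempty ∧
  (∀ a : α, (a, true) ∈ I → ∀ J ∈ Js, a ∈ J) ∧
  (∀ a : α, (a, false) ∈ I → ∀ J ∈ Js, a ∉ J) ∧
  (∀ a ∈ A, (a, true) ∉ I → (a, false) ∉ I →
    (∃ J ∈ Js, a ∈ J) ∧ ∃ J' ∈ Js, a ∉ J')

/-- `W` is a world view of `Π`: a WVI over `ats(Π)` compatible with `AS(Π^W)`. -/
def IsWorldView (P : Set (ERule α)) (W : Set (Lit α)) : Prop :=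
  IsWVI (elpAts P) W ∧ Compatible (elpAts P) W (answerSets (ereduct P W))

/-- Every world view of an ELP `Π` is a plausible world view
    interpretation of `Π`: if `W ∈ WVS(Π)` then `AS(Π_pe^W) ≠ ∅`. -/
theorem worldView_is_plausible (P : Set (ERule α)) (hwf : WfELP P)
    (W : Set (Lit α)) (hW : IsWorldView P W) :
    PlausibleFor P W := by
  obtain ⟨hwvi, ⟨⟨J, hJ⟩, -⟩⟩ := hW
  have hempty : ereduct (peParts P) W = ∅ := by
    ext r'
    simp only [Set.mem_empty_iff_false, iff_false]
    rintro ⟨r, ⟨hrP, hpe⟩, hpos, hneg, rfl⟩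
    have hw := hwf r hrP
    -- purely epistemic + well-formed ⇒ head, bpos, bneg are empty
    have hsub : r.head ∪ r.bpos ∪ r.bneg ⊆ r.exats := by
      intro a ha
      by_contra hna
      have : a ∈ r.axats := ⟨Or.inl ha, hna⟩
      rw [hpe] at this
      exact this
    have h0 : r.head ∪ r.bpos ∪ r.bneg = ∅ := by
      apply Set.eq_empty_iff_forall_notMem.mpr
      intro a ha
      have : a ∈ (r.head ∪ r.bpos ∪ r.bneg) ∩ r.exats := ⟨ha, hsub ha⟩
      rw [hw.1] at this
      exact this
    have hh : r.head = ∅ := by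
      have := Set.union_empty_iff.mp (Set.union_empty_iff.mp h0).1
      exact this.1
    have hbp : r.bpos = ∅ := by
      have := Set.union_empty_iff.mp (Set.union_empty_iff.mp h0).1
      exact this.2
    have hbn : r.bneg = ∅ := (Set.union_empty_iff.mp h0).2
    -- the rule survives in the full reduct, contradicting J being a model
    have hmem : (⟨r.head, r.bpos, r.bneg⟩ : PRule α) ∈ ereduct P W :=
      ⟨r, hrP, hpos, hneg, rfl⟩
    have hgl : (⟨r.head, r.bpos, ∅⟩ : PRule α) ∈ glReduct (ereduct P W) J := by
      exact ⟨⟨r.head, r.bpos, r.bneg⟩, hmem, by simp [hbn], rfl⟩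
    have hsat := hJ.1 _ hgl
    rcases hsat with ⟨a, ha, -⟩ | hns
    · simp [PRule.SatBy, hh] at ha
    · exact hns (by simp [hbp])
  refine ⟨∅, ?_, ?_⟩
  · intro r hr
    rw [hempty] at hr
    obtain ⟨r'', hr'', -⟩ := hr
    exact absurd hr'' (Set.notMem_empty _)
  · intro K hK _
    exact Set.subset_empty_iff.mp hK

end ELP
end

section
/- Plausibility is modular with respect to union: for ELPs Π_1 and Π_2 and any WVI I over a set A with ex-ats(Π_1) ∪ ex-ats(Π_2) ⊆ A, it holds that I ⊨_p (Π_1 ∪ Π_2) if and only if I ⊨_p Π_1 and I ⊨_p Π_2. -/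
/- Formalization of epistemic logic programs (ELPs), following the paper
   "Utilizing Treewidth for Quantitative Reasoning on Epistemic Logic Programs". -/

namespace ELP

variable {α : Type}

lemma pe_reduct_rule_empty {P : Set (ERule α)} (hwf : WfELP P) (I : Set (Lit α))
    {r' : PRule α} (hr' : r' ∈ ereduct (peParts P) I) :
    r' = ⟨∅, ∅, ∅⟩ := by
  obtain ⟨r, ⟨hrP, hpe⟩, _, _, rfl⟩ := hr'
  have hw := hwf r hrP
  have hsub : r.head ∪ r.bpos ∪ r.bneg ⊆ r.exats := by
    intro a ha
    by_contra h
    have : a ∈ r.axats := ⟨Or.inl ha, h⟩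
    rw [hpe] at this
    exact this
  have hemp : r.head ∪ r.bpos ∪ r.bneg = ∅ := by
    have := hw.1
    apply Set.eq_empty_iff_forall_notMem.2
    intro a ha
    have : a ∈ (r.head ∪ r.bpos ∪ r.bneg) ∩ r.exats := ⟨ha, hsub ha⟩
    rw [hw.1] at this
    exact this
  have h1 : r.head = ∅ := Set.eq_empty_iff_forall_notMem.2
    fun a ha => Set.eq_empty_iff_forall_notMem.1 hemp a (Or.inl (Or.inl ha))
  have h2 : r.bpos = ∅ := Set.eq_empty_iff_forall_notMem.2
    fun a ha => Set.eq_empty_iff_forall_notMem.1 hemp a (Or.inl (Or.inr ha))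
  have h3 : r.bneg = ∅ := Set.eq_empty_iff_forall_notMem.2
    fun a ha => Set.eq_empty_iff_forall_notMem.1 hemp a (Or.inr ha)
  simp [h1, h2, h3]

lemma plausible_iff_reduct_empty {P : Set (ERule α)} (hwf : WfELP P) (I : Set (Lit α)) :
    PlausibleFor P I ↔ ereduct (peParts P) I = ∅ := by
  constructor
  · rintro ⟨J, hJmod, _⟩
    by_contra hne
    obtain ⟨r', hr'⟩ := Set.nonempty_iff_ne_empty.2 hne
    have hr'e := pe_reduct_rule_empty hwf I hr'
    subst hr'e
    have hg : (⟨∅, ∅, ∅⟩ : PRule α) ∈ glReduct (ereduct (peParts P) I) J :=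
      ⟨⟨∅, ∅, ∅⟩, hr', by simp⟩
    have := hJmod _ hg
    rcases this with h | h
    · simp [Set.eq_empty_iff_forall_notMem] at h
    · exact h (Set.empty_subset _)
  · intro h
    refine ⟨∅, ?_, ?_⟩
    · intro r hr
      rw [h] at hr
      obtain ⟨r, hr, _⟩ := hr
      exact absurd hr (Set.notMem_empty _)
    · intro J hJ _
      exact Set.subset_empty_iff.1 hJ

lemma peParts_union (P1 P2 : Set (ERule α)) :
    peParts (P1 ∪ P2) = peParts P1 ∪ peParts P2 := by
  ext r
  simp only [peParts, Set.mem_union, Set.mem_setOf_eq]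
  tauto

lemma ereduct_union (Q1 Q2 : Set (ERule α)) (I : Set (Lit α)) :
    ereduct (Q1 ∪ Q2) I = ereduct Q1 I ∪ ereduct Q2 I := by
  ext r'
  simp only [ereduct, Set.mem_union, Set.mem_setOf_eq]
  constructor
  · rintro ⟨r, hr | hr, h⟩
    · exact Or.inl ⟨r, hr, h⟩
    · exact Or.inr ⟨r, hr, h⟩
  · rintro (⟨r, hr, h⟩ | ⟨r, hr, h⟩)
    · exact ⟨r, Or.inl hr, h⟩
    · exact ⟨r, Or.inr hr, h⟩

/-- Plausibility is modular with respect to union: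
    `I ⊨_p (Π₁ ∪ Π₂)` iff `I ⊨_p Π₁` and `I ⊨_p Π₂`. -/
theorem plausible_union_iff (P1 P2 : Set (ERule α))
    (hwf1 : WfELP P1) (hwf2 : WfELP P2)
    (A : Set α) (hA : elpExats P1 ∪ elpExats P2 ⊆ A)
    (I : Set (Lit α)) (hI : IsWVI A I) :
    PlausibleFor (P1 ∪ P2) I ↔ PlausibleFor P1 I ∧ PlausibleFor P2 I := by
  have hwf12 : WfELP (P1 ∪ P2) := by
    intro r hr
    rcases hr with h | h
    · exact hwf1 r h
    · exact hwf2 r h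
  rw [plausible_iff_reduct_empty hwf12, plausible_iff_reduct_empty hwf1,
    plausible_iff_reduct_empty hwf2, peParts_union, ereduct_union,
    Set.union_empty_iff]

end ELP
end

section
/- Let F be a 3-CNF formula over a finite variable set V and let Π_F be the associated ELP. If M ⊆ V is a model of F, then the WVI I_M := {v : v ∈ M} ∪ {¬v : v ∈ V \ M} over V is a plausible WVI of Π_F, i.e., I_M ⊨_p Π_F. -/
/- Formalization of epistemic logic programs (ELPs), following the paper
   "Utilizing Treewidth for Quantitative Reasoning on Epistemic Logic Programs". -/

namespace ELP

variable {α : Type}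

/-- A 3-clause is a disjunction of three literals. -/
abbrev Clause (α : Type) := Lit α × Lit α × Lit α

/-- The atoms of a clause. -/
def clauseAtoms (c : Clause α) : Set α := {c.1.1, c.2.1.1, c.2.2.1}

/-- A literal is true under the assignment `M` (the set of true variables). -/
def LitTrue (M : Set α) (l : Lit α) : Prop := if l.2 then l.1 ∈ M else l.1 ∉ M

/-- `M ⊆ V` is a model of the 3-CNF `F`: every clause contains a true literal. -/
def IsCnfModel (V : Set α) (F : Set (Clause α)) (M : Set α) : Prop :=
  M ⊆ V ∧ ∀ c ∈ F, LitTrue M c.1 ∨ LitTrue M c.2.1 ∨ LitTrue M c.2.2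

/-- The ELP `Π_F` associated with a 3-CNF `F` over variables `V`:
    a rule `← not v, not ¬v` for every `v ∈ V` and a rule
    `← not ℓ₁, not ℓ₂, not ℓ₃` for every clause `ℓ₁ ∨ ℓ₂ ∨ ℓ₃` of `F`. -/
def cnfELP (V : Set α) (F : Set (Clause α)) : Set (ERule α) :=
  { r | ∃ v ∈ V, r = ⟨∅, ∅, ∅, {(v, true), (v, false)}, ∅⟩ } ∪
  { r | ∃ c ∈ F, r = ⟨∅, ∅, ∅, {c.1, c.2.1, c.2.2}, ∅⟩ }

/-- The WVI `I_M = {v : v ∈ M} ∪ {¬v : v ∈ V \ M}` induced by an assignment `M`. -/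
def assignWVI (V M : Set α) : Set (Lit α) :=
  { l | (l.2 = true ∧ l.1 ∈ M) ∨ (l.2 = false ∧ l.1 ∈ V \ M) }

/-- If `M ⊆ V` is a model of the 3-CNF `F`, then the WVI
    `I_M = {v : v ∈ M} ∪ {¬v : v ∈ V \ M}` is a plausible WVI of `Π_F`. -/
theorem cnf_model_gives_plausible (V : Set α) (hV : V.Finite)
    (F : Set (Clause α)) (hF : F.Finite) (hFV : ∀ c ∈ F, clauseAtoms c ⊆ V)
    (M : Set α) (hM : IsCnfModel V F M) :
    PlausibleFor (cnfELP V F) (assignWVI V M) := by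
  have hred : ereduct (peParts (cnfELP V F)) (assignWVI V M) = ∅ := by
    ext r'
    simp only [Set.mem_empty_iff_false, iff_false]
    rintro ⟨r, hr, hpos, hneg, rfl⟩
    rcases hr.1 with ⟨v, hv, rfl⟩ | ⟨c, hc, rfl⟩
    · by_cases hvM : v ∈ M
      · exact hpos (v, true) (by simp) (Or.inl ⟨rfl, hvM⟩)
      · exact hpos (v, false) (by simp) (Or.inr ⟨rfl, hv, hvM⟩)
    · have hat := hFV c hc
      have key : ∀ l : Lit α, l.1 ∈ V → LitTrue M l → l ∈ assignWVI V M := by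
        rintro ⟨a, b⟩ ha hl
        cases b
        · exact Or.inr ⟨rfl, ha, by simpa [LitTrue] using hl⟩
        · exact Or.inl ⟨rfl, by simpa [LitTrue] using hl⟩
      rcases hM.2 c hc with h | h | h
      · exact hpos c.1 (by simp) (key _ (hat (by simp [clauseAtoms])) h)
      · exact hpos c.2.1 (by simp) (key _ (hat (by simp [clauseAtoms])) h)
      · exact hpos c.2.2 (by simp) (key _ (hat (by simp [clauseAtoms])) h)
  refine ⟨∅, ?_, ?_⟩
  · rintro r ⟨s, hs, -⟩
    simp [hred] at hs
  · intro J hJ _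
    exact Set.subset_empty_iff.mp hJ

end ELP
end

section
/- Let F be a 3-CNF formula over a finite variable set V and let Π_F be the associated ELP. If I is a WVI over V with I ⊨_p Π_F, then for every variable v ∈ V exactly one of v, ¬v belongs to I, and the assignment M_I := {v ∈ V : v ∈ I} is a model of F. -/
/- Formalization of epistemic logic programs (ELPs), following the paper
   "Utilizing Treewidth for Quantitative Reasoning on Epistemic Logic Programs". -/

namespace ELP

variable {α : Type}

-- Every rule of `Π_F` is purely-epistemic.
lemma cnfELP_pe (V : Set α) (F : Set (Clause α)) :
    peParts (cnfELP V F) = cnfELP V F := by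
  apply Set.eq_of_subset_of_subset (fun r hr => hr.1)
  intro r hr
  refine ⟨hr, ?_⟩
  rcases hr with ⟨v, _, rfl⟩ | ⟨c, _, rfl⟩ <;>
    simp [ERule.PurelyEpistemic, ERule.axats, ERule.ats, Set.diff_eq_empty]

-- Every rule of `Π_F` has some positive epistemic literal in `I`.
lemma rule_hit (V : Set α) (F : Set (Clause α)) (I : Set (Lit α))
    (hpl : PlausibleFor (cnfELP V F) I) {r : ERule α} (hr : r ∈ cnfELP V F)
    (hrn : r.eneg = ∅) (hrh : r.head = ∅) (hrp : r.bpos = ∅) (hrb : r.bneg = ∅) :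
    ∃ l ∈ r.epos, l ∈ I := by
  by_contra h
  push_neg at h
  obtain ⟨X, hX, _⟩ := hpl
  have hmem : (⟨∅, ∅, ∅⟩ : PRule α) ∈ ereduct (peParts (cnfELP V F)) I := by
    refine ⟨r, ?_, h, ?_, ?_⟩
    · rw [cnfELP_pe]; exact hr
    · intro l hl; rw [hrn] at hl; exact hl.elim
    · rw [hrh, hrp, hrb]
  have hg : (⟨∅, ∅, ∅⟩ : PRule α) ∈ glReduct (ereduct (peParts (cnfELP V F)) I) X :=
    ⟨⟨∅, ∅, ∅⟩, hmem, by simp, rfl⟩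
  have := hX _ hg
  rcases this with ⟨x, hx⟩ | hns
  · simp at hx
  · exact hns (Set.empty_subset X)

/-- If `I` is a WVI over `V` with `I ⊨_p Π_F`, then for every `v ∈ V`
    exactly one of `v, ¬v` belongs to `I`, and `M_I = {v ∈ V : v ∈ I}` is a model of `F`. -/
theorem plausible_gives_cnf_model (V : Set α) (hV : V.Finite)
    (F : Set (Clause α)) (hF : F.Finite) (hFV : ∀ c ∈ F, clauseAtoms c ⊆ V)
    (I : Set (Lit α)) (hI : IsWVI V I) (hpl : PlausibleFor (cnfELP V F) I) :
    (∀ v ∈ V, Xor' ((v, true) ∈ I) ((v, false) ∈ I)) ∧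
    IsCnfModel V F { v ∈ V | (v, true) ∈ I } := by
  obtain ⟨hIA, hcons⟩ := hI
  have hlit : ∀ l ∈ I, LitTrue { v ∈ V | (v, true) ∈ I } l := by
    rintro ⟨a, b⟩ hl
    cases b
    · have : (a, true) ∉ I := fun ht => hcons a ⟨ht, hl⟩
      simp [LitTrue, this]
    · exact by simp [LitTrue]; exact ⟨hIA _ hl, hl⟩
  constructor
  · intro v hv
    have hr : (⟨∅, ∅, ∅, {(v, true), (v, false)}, ∅⟩ : ERule α) ∈ cnfELP V F :=
      Or.inl ⟨v, hv, rfl⟩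
    obtain ⟨l, hl, hlI⟩ := rule_hit V F I hpl hr rfl rfl rfl rfl
    have hnb : ¬ ((v, true) ∈ I ∧ (v, false) ∈ I) := hcons v
    rcases hl with rfl | rfl
    · exact Or.inl ⟨hlI, fun hf => hnb ⟨hlI, hf⟩⟩
    · exact Or.inr ⟨hlI, fun ht => hnb ⟨ht, hlI⟩⟩
  · refine ⟨fun v hv => hv.1, fun c hc => ?_⟩
    have hr : (⟨∅, ∅, ∅, {c.1, c.2.1, c.2.2}, ∅⟩ : ERule α) ∈ cnfELP V F :=
      Or.inr ⟨c, hc, rfl⟩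
    obtain ⟨l, hl, hlI⟩ := rule_hit V F I hpl hr rfl rfl rfl rfl
    rcases hl with rfl | rfl | rfl
    · exact Or.inl (hlit _ hlI)
    · exact Or.inr (Or.inl (hlit _ hlI))
    · exact Or.inr (Or.inr (hlit _ hlI))

end ELP
end

section
/- World views are uniquely determined by their restriction to the epistemic atoms: if Π is an ELP and W, W' ∈ WVS(Π) satisfy W|ex-ats(Π) = W'|ex-ats(Π), then W = W'. -/
/- Formalization of epistemic logic programs (ELPs), following the paper
   "Utilizing Treewidth for Quantitative Reasoning on Epistemic Logic Programs". -/

namespace ELP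

variable {α : Type}

lemma ereduct_eq_of_restrict (P : Set (ERule α)) (W W' : Set (Lit α))
    (h : restrict W (elpExats P) = restrict W' (elpExats P)) :
    ereduct P W = ereduct P W' := by
  have key : ∀ r ∈ P, ∀ l ∈ r.epos ∪ r.eneg, (l ∈ W ↔ l ∈ W') := by
    intro r hr l hl
    have hex : l.1 ∈ elpExats P := by
      refine Set.mem_biUnion hr ?_
      exact ⟨l, hl, rfl⟩
    constructor
    · intro hlW
      have : l ∈ restrict W' (elpExats P) := h ▸ ⟨hlW, hex⟩
      exact this.1
    · intro hlW
      have : l ∈ restrict W (elpExats P) := h.symm ▸ ⟨hlW, hex⟩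
      exact this.1
  ext r'
  constructor
  · rintro ⟨r, hr, h1, h2, h3⟩
    exact ⟨r, hr, fun l hl hmem => h1 l hl ((key r hr l (Or.inl hl)).mpr hmem),
      fun l hl => (key r hr l (Or.inr hl)).mp (h2 l hl), h3⟩
  · rintro ⟨r, hr, h1, h2, h3⟩
    exact ⟨r, hr, fun l hl hmem => h1 l hl ((key r hr l (Or.inl hl)).mp hmem),
      fun l hl => (key r hr l (Or.inr hl)).mpr (h2 l hl), h3⟩

lemma subset_of_compatible {A : Set α} {W W' : Set (Lit α)} {Js : Set (Set α)}
    (hwvi : IsWVI A W) (hwvi' : IsWVI A W')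
    (hc : Compatible A W Js) (hc' : Compatible A W' Js) : W ⊆ W' := by
  rintro ⟨a, b⟩ hl
  have hA : a ∈ A := hwvi.1 _ hl
  obtain ⟨Jne, hpos, hneg, hmix⟩ := hc
  obtain ⟨_, hpos', hneg', hmix'⟩ := hc'
  cases b with
  | true =>
    by_contra hnot
    by_cases hf : (a, false) ∈ W'
    · obtain ⟨J, hJ⟩ := Jne
      exact hneg' a hf J hJ (hpos a hl J hJ)
    · obtain ⟨_, ⟨J', hJ', haJ'⟩⟩ := hmix' a hA hnot hf
      exact haJ' (hpos a hl J' hJ')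
  | false =>
    by_contra hnot
    by_cases ht : (a, true) ∈ W'
    · obtain ⟨J, hJ⟩ := Jne
      exact hneg a hl J hJ (hpos' a ht J hJ)
    · obtain ⟨⟨J, hJ, haJ⟩, _⟩ := hmix' a hA ht hnot
      exact hneg a hl J hJ haJ

/-- World views are uniquely determined by their restriction to the
    epistemic atoms: if `W, W' ∈ WVS(Π)` and `W|ex-ats(Π) = W'|ex-ats(Π)`, then `W = W'`. -/
theorem worldView_unique_of_exats_restrict (P : Set (ERule α)) (hwf : WfELP P)
    (W W' : Set (Lit α)) (hW : IsWorldView P W) (hW' : IsWorldView P W')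
    (h : restrict W (elpExats P) = restrict W' (elpExats P)) :
    W = W' := by
  have hred : ereduct P W = ereduct P W' := ereduct_eq_of_restrict P W W' h
  have hc := hW.2
  have hc' := hW'.2
  rw [hred] at hc
  exact Set.Subset.antisymm
    (subset_of_compatible hW.1 hW'.1 hc hc')
    (subset_of_compatible hW'.1 hW.1 hc' hc)

end ELP
end

section
/- Let Π be an ELP, A ⊆ ats(Π) a set of atoms, and I a WVI over A. Define Π ⊔ I := Π ∪ {← not ℓ : ℓ ∈ I} ∪ {← ¬ not ¬a, ← ¬ not a : a ∈ A, {a, ¬a} ∩ I = ∅} (in the paper's notation, Π ∪ {← ¬K ℓ : ℓ ∈ I} ∪ {← ¬M a; ← ¬M ¬a : a ∈ A, a ∉ I, ¬a ∉ I}). Then WVS(Π ⊔ I) = {W ∈ WVS(Π) : I ⊆ W and for every a ∈ A with {a, ¬a} ∩ I = ∅ also {a, ¬a} ∩ W = ∅}; i.e., the world views of Π ⊔ I are exactly the world views of Π that extend I and leave each atom of A undecided in I also undecided. -/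
/- Formalization of epistemic logic programs (ELPs), following the paper
   "Utilizing Treewidth for Quantitative Reasoning on Epistemic Logic Programs". -/

namespace ELP

variable {α : Type}

/-- `Π ⊔ I := Π ∪ {← not ℓ : ℓ ∈ I} ∪ {← ¬ not ¬a, ← ¬ not a : a ∈ A, {a,¬a} ∩ I = ∅}`
    (in the paper's notation `Π ∪ {← ¬K ℓ : ℓ ∈ I} ∪ {← ¬M a; ← ¬M ¬a : a undecided}`). -/
def elpSqcup (P : Set (ERule α)) (A : Set α) (I : Set (Lit α)) : Set (ERule α) :=
  P ∪ { r | ∃ l ∈ I, r = ⟨∅, ∅, ∅, {l}, ∅⟩ } ∪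
  { r | ∃ a ∈ A, (a, true) ∉ I ∧ (a, false) ∉ I ∧
        (r = ⟨∅, ∅, ∅, ∅, {(a, false)}⟩ ∨ r = ⟨∅, ∅, ∅, ∅, {(a, true)}⟩) }

lemma answerSets_empty_of_mem_empty_rule {Q : Set (PRule α)}
    (h : (⟨∅, ∅, ∅⟩ : PRule α) ∈ Q) : answerSets Q = ∅ := by
  ext J
  simp only [answerSets, Set.mem_setOf_eq, Set.mem_empty_iff_false, iff_false]
  rintro ⟨hmod, -⟩
  have hm : (⟨∅, ∅, ∅⟩ : PRule α) ∈ glReduct Q J :=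
    ⟨⟨∅, ∅, ∅⟩, h, by simp, rfl⟩
  have := hmod _ hm
  simp [PRule.SatBy] at this

lemma elpAts_sqcup (P : Set (ERule α)) (A : Set α) (hA : A ⊆ elpAts P)
    (I : Set (Lit α)) (hI : IsWVI A I) :
    elpAts (elpSqcup P A I) = elpAts P := by
  apply subset_antisymm
  · intro x hx
    simp only [elpAts, Set.mem_iUnion] at hx
    obtain ⟨r, hr, hx⟩ := hx
    rcases hr with (hr | hr) | hr
    · simp only [elpAts, Set.mem_iUnion]; exact ⟨r, hr, hx⟩
    · obtain ⟨l, hl, rfl⟩ := hr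
      have : x = l.1 := by
        simpa [ERule.ats, ERule.exats] using hx
      subst this
      exact hA (hI.1 l hl)
    · obtain ⟨a, ha, h1, h2, (rfl | rfl)⟩ := hr <;>
      · have : x = a := by simpa [ERule.ats, ERule.exats] using hx
        subst this
        exact hA ha
  · intro x hx
    simp only [elpAts, Set.mem_iUnion] at hx ⊢
    obtain ⟨r, hr, hx⟩ := hx
    exact ⟨r, Or.inl (Or.inl hr), hx⟩

lemma ereduct_sqcup_eq (P : Set (ERule α)) (A : Set α) (I W : Set (Lit α))
    (hIW : I ⊆ W)
    (hund : ∀ a ∈ A, (a, true) ∉ I → (a, false) ∉ I →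
      (a, true) ∉ W ∧ (a, false) ∉ W) :
    ereduct (elpSqcup P A I) W = ereduct P W := by
  ext r'
  constructor
  · rintro ⟨r, hr, h1, h2, rfl⟩
    rcases hr with (hr | hr) | hr
    · exact ⟨r, hr, h1, h2, rfl⟩
    · obtain ⟨l, hl, rfl⟩ := hr
      exact absurd (hIW hl) (h1 l (by simp))
    · obtain ⟨a, ha, ha1, ha2, (rfl | rfl)⟩ := hr
      · exact absurd (h2 _ (by simp)) (hund a ha ha1 ha2).2
      · exact absurd (h2 _ (by simp)) (hund a ha ha1 ha2).1
  · rintro ⟨r, hr, h1, h2, rfl⟩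
    exact ⟨r, Or.inl (Or.inl hr), h1, h2, rfl⟩

/-- The world views of `Π ⊔ I` are exactly the world views of `Π`
    that extend `I` and leave each atom of `A` undecided in `I` also undecided. -/
theorem worldViews_sqcup (P : Set (ERule α)) (hwf : WfELP P)
    (A : Set α) (hA : A ⊆ elpAts P) (I : Set (Lit α)) (hI : IsWVI A I) :
    { W : Set (Lit α) | IsWorldView (elpSqcup P A I) W } =
    { W : Set (Lit α) | IsWorldView P W ∧ I ⊆ W ∧
        ∀ a ∈ A, (a, true) ∉ I → (a, false) ∉ I →
          (a, true) ∉ W ∧ (a, false) ∉ W } := by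
  ext W
  simp only [Set.mem_setOf_eq]
  have hats := elpAts_sqcup P A hA I hI
  constructor
  · rintro ⟨hwvi, hcomp⟩
    have hne := hcomp.1
    have hIW : I ⊆ W := by
      intro l hl
      by_contra hlW
      have hmem : (⟨∅, ∅, ∅⟩ : PRule α) ∈ ereduct (elpSqcup P A I) W :=
        ⟨⟨∅, ∅, ∅, {l}, ∅⟩, Or.inl (Or.inr ⟨l, hl, rfl⟩),
          by simpa using hlW, by simp, rfl⟩
      rw [answerSets_empty_of_mem_empty_rule hmem] at hne
      exact Set.not_nonempty_empty hne
    have hund : ∀ a ∈ A, (a, true) ∉ I → (a, false) ∉ I →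
        (a, true) ∉ W ∧ (a, false) ∉ W := by
      intro a ha h1 h2
      constructor
      · intro hW
        have hmem : (⟨∅, ∅, ∅⟩ : PRule α) ∈ ereduct (elpSqcup P A I) W :=
          ⟨⟨∅, ∅, ∅, ∅, {(a, true)}⟩, Or.inr ⟨a, ha, h1, h2, Or.inr rfl⟩,
            by simp, by simpa using hW, rfl⟩
        rw [answerSets_empty_of_mem_empty_rule hmem] at hne
        exact Set.not_nonempty_empty hne
      · intro hW
        have hmem : (⟨∅, ∅, ∅⟩ : PRule α) ∈ ereduct (elpSqcup P A I) W :=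
          ⟨⟨∅, ∅, ∅, ∅, {(a, false)}⟩, Or.inr ⟨a, ha, h1, h2, Or.inl rfl⟩,
            by simp, by simpa using hW, rfl⟩
        rw [answerSets_empty_of_mem_empty_rule hmem] at hne
        exact Set.not_nonempty_empty hne
    have hred := ereduct_sqcup_eq P A I W hIW hund
    rw [hats] at hwvi
    rw [hats, hred] at hcomp
    exact ⟨⟨hwvi, hcomp⟩, hIW, hund⟩
  · rintro ⟨⟨hwvi, hcomp⟩, hIW, hund⟩
    have hred := ereduct_sqcup_eq P A I W hIW hund
    unfold IsWorldView
    rw [hats, hred]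
    exact ⟨hwvi, hcomp⟩

end ELP
end
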